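/- Let p:[0,1]→[0,1] be Borel measurable and q = 1−p. For all bounded nonnegative Borel functions φ, ψ:[0,1]→[0,∞), one has ∫₀¹ φ(x) · Qψ(x) dx = ∫₀¹ Q*φ(x) · ψ(x) dx, where Q*φ(x) := ∫₀^x (q(t)/(1−t)) φ(t) dt + ∫_x^1 (p(t)/t) φ(t) dt (the integrals taking values in [0,∞]). -/

import Mathlib

open MeasureTheory Filter Set

/-- The Diaconis–Friedman transition operator with weight function `p` (and `q = 1 − p`). -/
noncomputable def DFQ (p : ℝ → ℝ) (φ : ℝ → ℝ) : ℝ → ℝ :=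
  fun x => p x * (∫ t in (0 : ℝ)..1, φ (t * x)) +
    (1 - p x) * ∫ t in (0 : ℝ)..1, φ (t * x + 1 - t)

/-- The formal adjoint `Q*` of the Diaconis–Friedman operator, for nonnegative functions,
with values in `[0,∞]`:
`Q*φ(x) = ∫₀^x (q(t)/(1−t)) φ(t) dt + ∫_x^1 (p(t)/t) φ(t) dt`. -/
noncomputable def DFQstar (p : ℝ → ℝ) (φ : ℝ → ℝ) (x : ℝ) : ENNReal :=
  (∫⁻ t in Set.Ioo (0 : ℝ) x, ENNReal.ofReal ((1 - p t) / (1 - t) * φ t)) +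
    ∫⁻ t in Set.Ioo x 1, ENNReal.ofReal (p t / t * φ t)

/-- for Borel `p : [0,1] → [0,1]` and bounded nonnegative Borel `φ, ψ`,
`∫₀¹ φ(x)·Qψ(x) dx = ∫₀¹ Q*φ(x)·ψ(x) dx`. -/
theorem stmt11 (p : ℝ → ℝ) (hpmeas : Measurable p)
    (hp01 : ∀ x ∈ Set.Icc (0 : ℝ) 1, p x ∈ Set.Icc (0 : ℝ) 1)
    (φ ψ : ℝ → ℝ) (hφmeas : Measurable φ) (hψmeas : Measurable ψ)
    (hφ0 : ∀ x ∈ Set.Icc (0 : ℝ) 1, 0 ≤ φ x) (hψ0 : ∀ x ∈ Set.Icc (0 : ℝ) 1, 0 ≤ ψ x)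
    (hφbd : ∃ C : ℝ, ∀ x : ℝ, |φ x| ≤ C) (hψbd : ∃ C : ℝ, ∀ x : ℝ, |ψ x| ≤ C) :
    ∫⁻ x in Set.Icc (0 : ℝ) 1, ENNReal.ofReal (φ x * DFQ p ψ x)
      = ∫⁻ x in Set.Icc (0 : ℝ) 1, DFQstar p φ x * ENNReal.ofReal (ψ x) := by
  obtain ⟨Cψ, hCψ⟩ := hψbd
  set μ := volume.restrict (Icc (0:ℝ) 1) with hμ
  -- ψ is integrable on bounded intervals
  have hψint : ∀ a b : ℝ, IntegrableOn ψ (Ioc a b) := by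
    intro a b
    have hg : IntegrableOn (fun _ : ℝ => Cψ) (Ioc a b) volume :=
      integrableOn_const measure_Ioc_lt_top.ne
    exact hg.mono' hψmeas.aestronglyMeasurable.restrict
      (ae_of_all _ fun x => by simpa [Real.norm_eq_abs] using hCψ x)
  have hψennmeas : Measurable fun u => ENNReal.ofReal (ψ u) :=
    ENNReal.measurable_ofReal.comp hψmeas
  set f : ℝ → ℝ → ENNReal := fun x u =>
    (Ioo (0:ℝ) x).indicator (fun u => ENNReal.ofReal (p x / x * φ x * ψ u)) u
    + (Ioo x (1:ℝ)).indicator (fun u => ENNReal.ofReal ((1 - p x) / (1 - x) * φ x * ψ u)) u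
    with hfdef
  -- measurability of the kernel
  have hunc : Measurable (Function.uncurry f) := by
    have h1 : Measurable fun z : ℝ × ℝ => ENNReal.ofReal (p z.1 / z.1 * φ z.1 * ψ z.2) :=
      ENNReal.measurable_ofReal.comp
        ((((hpmeas.comp measurable_fst).div measurable_fst).mul
          (hφmeas.comp measurable_fst)).mul (hψmeas.comp measurable_snd))
    have h2 : Measurable fun z : ℝ × ℝ =>
        ENNReal.ofReal ((1 - p z.1) / (1 - z.1) * φ z.1 * ψ z.2) :=
      ENNReal.measurable_ofReal.comp
        (((((measurable_const.sub (hpmeas.comp measurable_fst)).div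
          (measurable_const.sub measurable_fst)).mul
          (hφmeas.comp measurable_fst)).mul (hψmeas.comp measurable_snd)))
    have s1 : MeasurableSet {z : ℝ × ℝ | 0 < z.2 ∧ z.2 < z.1} :=
      (measurableSet_lt measurable_const measurable_snd).inter
        (measurableSet_lt measurable_snd measurable_fst)
    have s2 : MeasurableSet {z : ℝ × ℝ | z.1 < z.2 ∧ z.2 < 1} :=
      (measurableSet_lt measurable_fst measurable_snd).inter
        (measurableSet_lt measurable_snd measurable_const)
    have e : Function.uncurry f =
        ({z : ℝ × ℝ | 0 < z.2 ∧ z.2 < z.1}.indicator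
          (fun z => ENNReal.ofReal (p z.1 / z.1 * φ z.1 * ψ z.2)))
        + ({z : ℝ × ℝ | z.1 < z.2 ∧ z.2 < 1}.indicator
          (fun z => ENNReal.ofReal ((1 - p z.1) / (1 - z.1) * φ z.1 * ψ z.2))) := by
      funext z
      simp only [Function.uncurry, hfdef, Pi.add_apply, Set.indicator_apply, Set.mem_Ioo,
        Set.mem_setOf_eq]
    rw [e]
    exact (h1.indicator s1).add (h2.indicator s2)
  have hswap : ∫⁻ x, ∫⁻ u, f x u ∂μ ∂μ = ∫⁻ u, ∫⁻ x, f x u ∂μ ∂μ :=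
    lintegral_lintegral_swap hunc.aemeasurable
  -- a.e. points of [0,1] lie in (0,1)
  have h01 : ∀ᵐ x ∂μ, x ∈ Ioo (0:ℝ) 1 := by
    rw [hμ, ae_restrict_iff' measurableSet_Icc]
    filter_upwards [Filter.eventuallyEq_set.mp
      (Ioo_ae_eq_Icc (μ := volume) (a := (0:ℝ)) (b := 1))] with x hx hxm
    exact hx.mpr hxm
  -- LHS computation
  have hL : (∫⁻ x, ENNReal.ofReal (φ x * DFQ p ψ x) ∂μ) = ∫⁻ x, ∫⁻ u, f x u ∂μ ∂μ := by
    refine lintegral_congr_ae ?_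
    filter_upwards [h01] with x hx
    have hx0 : (0:ℝ) < x := hx.1
    have hx1 : x < 1 := hx.2
    have hpx := hp01 x ⟨hx0.le, hx1.le⟩
    have hφx : 0 ≤ φ x := hφ0 x ⟨hx0.le, hx1.le⟩
    have hc1 : 0 ≤ p x / x * φ x := mul_nonneg (div_nonneg hpx.1 hx0.le) hφx
    have hc2 : 0 ≤ (1 - p x) / (1 - x) * φ x :=
      mul_nonneg (div_nonneg (by linarith [hpx.2]) (by linarith)) hφx
    have hA : (∫ t in (0:ℝ)..1, ψ (t * x)) = x⁻¹ * ∫ u in (0:ℝ)..x, ψ u := by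
      simpa using intervalIntegral.integral_comp_mul_right (a := (0:ℝ)) (b := 1) ψ hx0.ne'
    have hB : (∫ t in (0:ℝ)..1, ψ (t * x + 1 - t)) = (1 - x)⁻¹ * ∫ u in x..1, ψ u := by
      have e : ∀ t : ℝ, t * x + 1 - t = (x - 1) * t + 1 := fun t => by ring
      have hc : x - 1 ≠ 0 := by linarith
      have h := intervalIntegral.integral_comp_mul_add (a := (0:ℝ)) (b := 1) ψ hc 1
      simp only [e]
      rw [h, show (x-1) * 0 + 1 = (1:ℝ) by ring, show (x-1) * 1 + 1 = x by ring,
        intervalIntegral.integral_symm x 1, smul_eq_mul,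
        show (x-1)⁻¹ = -(1-x)⁻¹ by rw [show x - 1 = -(1-x) by ring, inv_neg]]
      ring
    have hA0 : 0 ≤ ∫ u in (0:ℝ)..x, ψ u :=
      intervalIntegral.integral_nonneg hx0.le fun u hu => hψ0 u ⟨hu.1, hu.2.trans hx1.le⟩
    have hB0 : 0 ≤ ∫ u in x..1, ψ u :=
      intervalIntegral.integral_nonneg hx1.le fun u hu => hψ0 u ⟨hx0.le.trans hu.1, hu.2⟩
    have hsplit : φ x * DFQ p ψ x
        = p x / x * φ x * (∫ u in (0:ℝ)..x, ψ u)
          + (1 - p x) / (1 - x) * φ x * (∫ u in x..1, ψ u) := by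
      simp only [DFQ]
      rw [hA, hB]
      generalize (∫ u in (0:ℝ)..x, ψ u) = A
      generalize (∫ u in x..1, ψ u) = B
      ring
    have hofA : ENNReal.ofReal (∫ u in (0:ℝ)..x, ψ u)
        = ∫⁻ u in Ioo (0:ℝ) x, ENNReal.ofReal (ψ u) := by
      rw [intervalIntegral.integral_of_le hx0.le,
        ofReal_integral_eq_lintegral_ofReal (hψint 0 x)
          ((ae_restrict_iff' measurableSet_Ioc).mpr (ae_of_all _ fun u hu =>
            hψ0 u ⟨hu.1.le, hu.2.trans hx1.le⟩))]
      exact (setLIntegral_congr Ioo_ae_eq_Ioc).symm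
    have hofB : ENNReal.ofReal (∫ u in x..1, ψ u)
        = ∫⁻ u in Ioo x 1, ENNReal.ofReal (ψ u) := by
      rw [intervalIntegral.integral_of_le hx1.le,
        ofReal_integral_eq_lintegral_ofReal (hψint x 1)
          ((ae_restrict_iff' measurableSet_Ioc).mpr (ae_of_all _ fun u hu =>
            hψ0 u ⟨(hx0.trans hu.1).le, hu.2⟩))]
      exact (setLIntegral_congr Ioo_ae_eq_Ioc).symm
    have hind1 : Measurable ((Ioo (0:ℝ) x).indicator
        (fun u => ENNReal.ofReal (p x / x * φ x * ψ u))) :=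
      (ENNReal.measurable_ofReal.comp (measurable_const.mul hψmeas)).indicator measurableSet_Ioo
    have e1 : Ioo (0:ℝ) x ∩ Icc (0:ℝ) 1 = Ioo (0:ℝ) x :=
      inter_eq_left.mpr fun u hu => ⟨hu.1.le, hu.2.le.trans hx1.le⟩
    have e2 : Ioo x (1:ℝ) ∩ Icc (0:ℝ) 1 = Ioo x 1 :=
      inter_eq_left.mpr fun u hu => ⟨hx0.le.trans hu.1.le, hu.2.le⟩
    have hfx : ∫⁻ u, f x u ∂μ
        = (∫⁻ u in Ioo (0:ℝ) x, ENNReal.ofReal (p x / x * φ x * ψ u))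
          + ∫⁻ u in Ioo x 1, ENNReal.ofReal ((1 - p x) / (1 - x) * φ x * ψ u) := by
      simp only [hfdef]
      rw [lintegral_add_left hind1, lintegral_indicator measurableSet_Ioo,
        lintegral_indicator measurableSet_Ioo, hμ,
        Measure.restrict_restrict measurableSet_Ioo,
        Measure.restrict_restrict measurableSet_Ioo, e1, e2]
    calc ENNReal.ofReal (φ x * DFQ p ψ x)
        = ENNReal.ofReal (p x / x * φ x * (∫ u in (0:ℝ)..x, ψ u))
          + ENNReal.ofReal ((1 - p x) / (1 - x) * φ x * (∫ u in x..1, ψ u)) := by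
          rw [hsplit, ENNReal.ofReal_add (mul_nonneg hc1 hA0) (mul_nonneg hc2 hB0)]
      _ = ENNReal.ofReal (p x / x * φ x) * (∫⁻ u in Ioo (0:ℝ) x, ENNReal.ofReal (ψ u))
          + ENNReal.ofReal ((1 - p x) / (1 - x) * φ x)
            * (∫⁻ u in Ioo x 1, ENNReal.ofReal (ψ u)) := by
          rw [ENNReal.ofReal_mul hc1, ENNReal.ofReal_mul hc2, hofA, hofB]
      _ = (∫⁻ u in Ioo (0:ℝ) x, ENNReal.ofReal (p x / x * φ x * ψ u))
          + ∫⁻ u in Ioo x 1, ENNReal.ofReal ((1 - p x) / (1 - x) * φ x * ψ u) := by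
          rw [← lintegral_const_mul _ hψennmeas, ← lintegral_const_mul _ hψennmeas]
          simp_rw [← ENNReal.ofReal_mul hc1, ← ENNReal.ofReal_mul hc2]
      _ = ∫⁻ u, f x u ∂μ := hfx.symm
  -- RHS computation
  have hR : (∫⁻ u, ∫⁻ x, f x u ∂μ ∂μ)
      = ∫⁻ u, DFQstar p φ u * ENNReal.ofReal (ψ u) ∂μ := by
    refine lintegral_congr_ae ?_
    filter_upwards [h01] with u hu
    have hu0 : (0:ℝ) < u := hu.1
    have hu1 : u < 1 := hu.2
    have hψu : 0 ≤ ψ u := hψ0 u ⟨hu0.le, hu1.le⟩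
    have e : ∀ x : ℝ, f x u
        = (Ioi u).indicator (fun x => ENNReal.ofReal (p x / x * φ x * ψ u)) x
          + (Iio u).indicator (fun x => ENNReal.ofReal ((1 - p x) / (1 - x) * φ x * ψ u)) x := by
      intro x
      simp only [hfdef, Set.indicator_apply, Set.mem_Ioo, Set.mem_Ioi, Set.mem_Iio,
        hu0, hu1, true_and, and_true]
    have hm1 : Measurable fun x : ℝ => ENNReal.ofReal (p x / x * φ x) :=
      ENNReal.measurable_ofReal.comp ((hpmeas.div measurable_id).mul hφmeas)
    have hm2 : Measurable fun x : ℝ => ENNReal.ofReal ((1 - p x) / (1 - x) * φ x) :=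
      ENNReal.measurable_ofReal.comp
        (((measurable_const.sub hpmeas).div (measurable_const.sub measurable_id)).mul hφmeas)
    have hm1' : Measurable fun x : ℝ => ENNReal.ofReal (p x / x * φ x * ψ u) :=
      ENNReal.measurable_ofReal.comp
        (((hpmeas.div measurable_id).mul hφmeas).mul measurable_const)
    have e1 : Ioi u ∩ Icc (0:ℝ) 1 = Ioc u 1 := by
      ext x
      simp only [mem_inter_iff, mem_Ioi, mem_Icc, mem_Ioc]
      constructor
      · rintro ⟨h1, _, h3⟩; exact ⟨h1, h3⟩
      · rintro ⟨h1, h2⟩; exact ⟨h1, (hu0.trans h1).le, h2⟩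
    have e2 : Iio u ∩ Icc (0:ℝ) 1 = Ico 0 u := by
      ext x
      simp only [mem_inter_iff, mem_Iio, mem_Icc, mem_Ico]
      constructor
      · rintro ⟨h1, h2, _⟩; exact ⟨h2, h1⟩
      · rintro ⟨h1, h2⟩; exact ⟨h2, h1, (h2.trans hu1).le⟩
    calc ∫⁻ x, f x u ∂μ
        = (∫⁻ x in Ioc u 1, ENNReal.ofReal (p x / x * φ x * ψ u))
          + ∫⁻ x in Ico 0 u, ENNReal.ofReal ((1 - p x) / (1 - x) * φ x * ψ u) := by
          simp_rw [e]
          rw [lintegral_add_left (hm1'.indicator measurableSet_Ioi),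
            lintegral_indicator measurableSet_Ioi, lintegral_indicator measurableSet_Iio, hμ,
            Measure.restrict_restrict measurableSet_Ioi,
            Measure.restrict_restrict measurableSet_Iio, e1, e2]
      _ = (∫⁻ x in Ioo u 1, ENNReal.ofReal (p x / x * φ x * ψ u))
          + ∫⁻ x in Ioo 0 u, ENNReal.ofReal ((1 - p x) / (1 - x) * φ x * ψ u) := by
          rw [setLIntegral_congr (Ioo_ae_eq_Ioc (a := u) (b := (1:ℝ))).symm,
            setLIntegral_congr (Ioo_ae_eq_Ico (a := (0:ℝ)) (b := u)).symm]
      _ = DFQstar p φ u * ENNReal.ofReal (ψ u) := by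
          simp_rw [ENNReal.ofReal_mul' hψu]
          rw [lintegral_mul_const _ hm1, lintegral_mul_const _ hm2]
          simp only [DFQstar, add_mul]
          exact add_comm _ _
  calc ∫⁻ x, ENNReal.ofReal (φ x * DFQ p ψ x) ∂μ
      = ∫⁻ x, ∫⁻ u, f x u ∂μ ∂μ := hL
    _ = ∫⁻ u, ∫⁻ x, f x u ∂μ ∂μ := hswap
    _ = ∫⁻ u, DFQstar p φ u * ENNReal.ofReal (ψ u) ∂μ := hR
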